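/- arXiv:2405.12108 — 2 statements merged into one kernel-verified Lean document; each statement's English description precedes it below -/
import Mathlib

section
/- Let d ≥ 1 and let v : ℝ^d → ℝ^d be twice continuously differentiable. Then the column-wise divergence of the adjugate of the Jacobian matrix of v vanishes identically: for every x ∈ ℝ^d and every index k ∈ {1,…,d}, one has ∑_{j=1}^d ∂_{x_j} [adj(Dv(x))]_{jk} = 0 (the Piola identity). -/
open Matrix

/-- The partial derivative `∂_{x_j} f (x)` of a scalar function on `ℝ^d`. -/
noncomputable def pderiv' {d : ℕ} (j : Fin d) (f : (Fin d → ℝ) → ℝ) (x : Fin d → ℝ) : ℝ :=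
  fderiv ℝ f x (Pi.single j 1)

/-- The Jacobian matrix `(Dv(x))_{ij} = ∂_{x_j} v_i(x)` of a map `v : ℝ^d → ℝ^d`. -/
noncomputable def jacobian {d : ℕ} (v : (Fin d → ℝ) → (Fin d → ℝ)) (x : Fin d → ℝ) :
    Matrix (Fin d) (Fin d) ℝ :=
  Matrix.of fun i j => pderiv' j (fun y => v y i) x

private lemma sum_symm_antisymm {d : ℕ} (c T : Fin d → Fin d → ℝ)
    (hc : ∀ j b, c j b = c b j) (hT : ∀ j b, T b j = - T j b) :
    ∑ j : Fin d, ∑ b : Fin d, c j b * T j b = 0 := by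
  have h : ∑ j : Fin d, ∑ b : Fin d, c j b * T j b
      = ∑ j : Fin d, ∑ b : Fin d, -(c j b * T j b) := by
    rw [Finset.sum_comm]
    refine Finset.sum_congr rfl fun j _ => Finset.sum_congr rfl fun b _ => ?_
    rw [hc b j, hT j b]; ring
  simp only [Finset.sum_neg_distrib] at h
  linarith

/-- **Piola identity**: for a C² map `v : ℝ^d → ℝ^d`, the column-wise divergence of the
adjugate of the Jacobian matrix vanishes:
`∑_j ∂_{x_j} [adj(Dv(x))]_{jk} = 0` for every `x` and every `k`. -/
theorem piola_identity {d : ℕ} (hd : 1 ≤ d) (v : (Fin d → ℝ) → (Fin d → ℝ))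
    (hv : ContDiff ℝ 2 v) (x : Fin d → ℝ) (k : Fin d) :
    ∑ j : Fin d, pderiv' j (fun y => (jacobian v y).adjugate j k) x = 0 := by
  classical
  set e : Fin d → (Fin d → ℝ) := fun j => Pi.single j 1 with he
  -- the determinant, as a continuous multilinear map on the rows
  let F : ContinuousMultilinearMap ℝ (fun _ : Fin d => (Fin d → ℝ)) ℝ :=
    { Matrix.detRowAlternating.toMultilinearMap with
      cont := by
        show Continuous fun m : Matrix (Fin d) (Fin d) ℝ => m.det
        exact continuous_id.matrix_det }
  have hFdef : ∀ m : Fin d → Fin d → ℝ, F m = Matrix.detRowAlternating m := fun _ => rfl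
  -- components of v are C²
  have hvc : ∀ i, ContDiff ℝ 2 (fun y => v y i) := fun i =>
    (ContinuousLinearMap.proj (R := ℝ) (φ := fun _ : Fin d => ℝ) i).contDiff.comp hv
  -- first derivative of components
  let φ : Fin d → (Fin d → ℝ) → ((Fin d → ℝ) →L[ℝ] ℝ) := fun i => fderiv ℝ (fun y => v y i)
  have hφ : ∀ i, ContDiff ℝ 1 (φ i) := fun i => (hvc i).fderiv_right (by norm_num)
  -- second derivative at x
  let Φ : Fin d → ((Fin d → ℝ) →L[ℝ] ((Fin d → ℝ) →L[ℝ] ℝ)) := fun i => fderiv ℝ (φ i) x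
  have hΦ : ∀ i, HasFDerivAt (φ i) (Φ i) x := fun i =>
    ((hφ i).differentiable one_ne_zero x).hasFDerivAt
  have hsymm : ∀ i j b, Φ i (e j) (e b) = Φ i (e b) (e j) := fun i j b =>
    second_derivative_symmetric
      (fun y => ((hvc i).differentiable two_ne_zero y).hasFDerivAt) (hΦ i) _ _
  -- the gradient (as a vector) of each component
  let g : Fin d → (Fin d → ℝ) → (Fin d → ℝ) := fun i y b => φ i y (e b)
  let G' : Fin d → ((Fin d → ℝ) →L[ℝ] (Fin d → ℝ)) := fun i =>
    ContinuousLinearMap.pi fun b => (ContinuousLinearMap.apply ℝ ℝ (e b)).comp (Φ i)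
  have hg : ∀ i, HasFDerivAt (g i) (G' i) x := fun i =>
    hasFDerivAt_pi.2 fun b => ((ContinuousLinearMap.apply ℝ ℝ (e b)).hasFDerivAt).comp x (hΦ i)
  have hG'apply : ∀ i j, G' i (e j) = fun b => Φ i (e j) (e b) := fun i j => rfl
  -- rows of the Jacobian at x
  let R : Fin d → (Fin d → ℝ) := fun i => g i x
  -- main derivative computation for each j
  have key : ∀ j : Fin d,
      pderiv' j (fun y => (jacobian v y).adjugate j k) x
        = ∑ i : Fin d, F (Function.update (Function.update R k (e j)) i
            (if i = k then 0 else G' i (e j))) := by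
    intro j
    let Gf : Fin d → (Fin d → ℝ) → (Fin d → ℝ) := fun i =>
      if i = k then Function.const _ (e j) else g i
    let Gd : Fin d → ((Fin d → ℝ) →L[ℝ] (Fin d → ℝ)) := fun i => if i = k then 0 else G' i
    have hGf : ∀ i, HasFDerivAt (Gf i) (Gd i) x := by
      intro i
      by_cases hik : i = k
      · simp only [Gf, Gd, if_pos hik]; exact hasFDerivAt_const _ _
      · simp only [Gf, Gd, if_neg hik]; exact hg i
    have hrows : ∀ y, (fun i => Gf i y) = Function.update (fun i' => g i' y) k (e j) := by
      intro y; funext i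
      by_cases hik : i = k
      · subst hik; simp [Gf]
      · simp [Gf, hik, Function.update_of_ne hik]
    have hfun : (fun y => (jacobian v y).adjugate j k) = fun y => F (fun i => Gf i y) := by
      funext y
      rw [Matrix.adjugate_apply, hrows y]
      rfl
    have hD := HasFDerivAt.multilinear_comp F hGf
    rw [pderiv', hfun, hD.fderiv]
    rw [ContinuousLinearMap.sum_apply]
    refine Finset.sum_congr rfl fun i _ => ?_
    rw [ContinuousLinearMap.comp_apply, ContinuousMultilinearMap.toContinuousLinearMap_apply]
    have h1 : (fun j' => Gf j' x) = Function.update R k (e j) := hrows x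
    have h2 : Gd i (Pi.single j 1) = (if i = k then 0 else G' i (e j)) := by
      by_cases hik : i = k <;> simp [Gd, hik, he]
    rw [h1, h2]
  calc ∑ j : Fin d, pderiv' j (fun y => (jacobian v y).adjugate j k) x
      = ∑ j : Fin d, ∑ i : Fin d, F (Function.update (Function.update R k (e j)) i
          (if i = k then 0 else G' i (e j))) := Finset.sum_congr rfl fun j _ => key j
    _ = ∑ i : Fin d, ∑ j : Fin d, F (Function.update (Function.update R k (e j)) i
          (if i = k then 0 else G' i (e j))) := Finset.sum_comm
    _ = 0 := by
        refine Finset.sum_eq_zero fun i _ => ?_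
        by_cases hik : i = k
        · subst hik
          refine Finset.sum_eq_zero fun j _ => ?_
          simp only [if_pos rfl]
          exact F.toMultilinearMap.map_update_zero _ _
        · simp only [if_neg hik]
          -- expand the updated row in the basis
          have expand : ∀ j : Fin d,
              F (Function.update (Function.update R k (e j)) i (G' i (e j)))
                = ∑ b : Fin d, (Φ i (e j) (e b)) *
                    F (Function.update (Function.update R k (e j)) i (e b)) := by
            intro j
            have hu : G' i (e j) = ∑ b : Fin d, (Φ i (e j) (e b)) • e b := by
              rw [hG'apply]
              funext b'
              simp [e, Pi.single_apply, Finset.sum_apply, mul_ite]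
            rw [hu, ← ContinuousMultilinearMap.toContinuousLinearMap_apply, map_sum]
            refine Finset.sum_congr rfl fun b _ => ?_
            rw [_root_.map_smul, ContinuousMultilinearMap.toContinuousLinearMap_apply, smul_eq_mul]
          have hTasym : ∀ j b : Fin d,
              F (Function.update (Function.update R k (e b)) i (e j))
                = - F (Function.update (Function.update R k (e j)) i (e b)) := by
            intro j b
            have hswap : Function.update (Function.update R k (e b)) i (e j)
                = (Function.update (Function.update R k (e j)) i (e b)) ∘ Equiv.swap i k := by
              funext a
              rcases eq_or_ne a i with rfl | hai
              · simp [Function.update_apply, Equiv.swap_apply_left, hik, Ne.symm hik]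
              · rcases eq_or_ne a k with rfl | hak
                · simp [Function.update_apply, Equiv.swap_apply_right, hik, Ne.symm hik]
                · simp [Function.update_apply, Equiv.swap_apply_of_ne_of_ne hai hak, hai, hak]
            rw [hswap, hFdef, hFdef]
            exact AlternatingMap.map_swap (Matrix.detRowAlternating (R := ℝ) (n := Fin d)) _ hik
          calc ∑ j : Fin d, F (Function.update (Function.update R k (e j)) i (G' i (e j)))
              = ∑ j : Fin d, ∑ b : Fin d, (Φ i (e j) (e b)) *
                  F (Function.update (Function.update R k (e j)) i (e b)) :=
                Finset.sum_congr rfl fun j _ => expand j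
            _ = 0 := sum_symm_antisymm _ _ (fun j b => hsymm i j b) hTasym
end

section
/- Let d ≥ 1 and let ψ : ℝ × ℝ^d → ℝ^d be twice continuously differentiable, with D_xψ(t,x) denoting the Jacobian matrix in the spatial variable. Then for every (t,x), ∂_t det(D_xψ(t,x)) = div_x( adj(D_xψ(t,x)) · ∂_tψ(t,x) ), i.e. the time derivative of the Jacobian determinant equals the spatial divergence of the vector field obtained by applying the adjugate of the spatial Jacobian to the time derivative of ψ (Jacobi's formula combined with the Piola identity). -/
open Matrix

/-- The spatial Jacobian matrix `(D_xψ(t,x))_{ij} = ∂_{x_j} ψ_i(t,x)` of a map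
`ψ : ℝ × ℝ^d → ℝ^d`. -/
noncomputable def jacobianX {d : ℕ} (ψ : ℝ × (Fin d → ℝ) → (Fin d → ℝ)) (t : ℝ)
    (x : Fin d → ℝ) : Matrix (Fin d) (Fin d) ℝ :=
  Matrix.of fun i j => pderiv' j (fun y => ψ (t, y) i) x

/-- The determinant, as a continuous multilinear map in the rows. -/
noncomputable def detCMM (d : ℕ) :
    ContinuousMultilinearMap ℝ (fun _ : Fin d => (Fin d → ℝ)) ℝ :=
  MultilinearMap.mkContinuous
    (Matrix.detRowAlternating : (Fin d → ℝ) [⋀^Fin d]→ₗ[ℝ] ℝ).toMultilinearMap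
    (Nat.factorial d) (by
      intro m
      have h1 : Matrix.detRowAlternating (Matrix.of m) =
          ∑ σ : Equiv.Perm (Fin d), Equiv.Perm.sign σ • ∏ i, m (σ i) i :=
        Matrix.det_apply (Matrix.of m)
      show ‖Matrix.detRowAlternating (Matrix.of m)‖ ≤ _
      rw [h1]
      calc ‖∑ σ : Equiv.Perm (Fin d), Equiv.Perm.sign σ • ∏ i, m (σ i) i‖
          ≤ ∑ σ : Equiv.Perm (Fin d), ‖Equiv.Perm.sign σ • ∏ i, m (σ i) i‖ :=
            norm_sum_le _ _
        _ ≤ ∑ _σ : Equiv.Perm (Fin d), ∏ i, ‖m i‖ := by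
            refine Finset.sum_le_sum fun σ _ => ?_
            have h2 : ‖Equiv.Perm.sign σ • ∏ i, m (σ i) i‖ = ‖∏ i, m (σ i) i‖ := by
              rcases Int.units_eq_one_or (Equiv.Perm.sign σ) with h | h <;>
                simp [h, norm_neg]
            rw [h2, ← Equiv.prod_comp σ (fun i => ‖m i‖), Real.norm_eq_abs,
              Finset.abs_prod]
            exact Finset.prod_le_prod (fun i _ => abs_nonneg _)
              (fun i _ => norm_le_pi_norm (m (σ i)) i)
        _ = (Nat.factorial d : ℝ) * ∏ i, ‖m i‖ := by
            simp [Finset.sum_const, Finset.card_univ, Fintype.card_perm]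
      )

lemma detCMM_apply {d : ℕ} (m : Fin d → (Fin d → ℝ)) :
    detCMM d m = Matrix.det (Matrix.of m) := rfl

lemma detCMM_swap {d : ℕ} (m : Fin d → (Fin d → ℝ)) {j l : Fin d} (h : j ≠ l) :
    detCMM d (m ∘ Equiv.swap j l) = - detCMM d m := by
  show Matrix.detRowAlternating (m ∘ Equiv.swap j l) = - Matrix.detRowAlternating m
  exact Matrix.detRowAlternating.map_swap m h

section setup

variable {d : ℕ} (ψ : ℝ × (Fin d → ℝ) → (Fin d → ℝ))

/-- Full Fréchet derivative of the `i`-th component of `ψ`. -/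
noncomputable def Dmap (i : Fin d) : (ℝ × (Fin d → ℝ)) → (ℝ × (Fin d → ℝ)) →L[ℝ] ℝ :=
  fderiv ℝ (fun p => ψ p i)

/-- Second derivative of the `i`-th component of `ψ`. -/
noncomputable def Bmap (i : Fin d) (q : ℝ × (Fin d → ℝ)) :
    (ℝ × (Fin d → ℝ)) →L[ℝ] (ℝ × (Fin d → ℝ)) →L[ℝ] ℝ :=
  fderiv ℝ (Dmap ψ i) q

variable {ψ}
variable (hψ : ContDiff ℝ 2 ψ)
include hψ

lemma hphi (i : Fin d) : ContDiff ℝ 2 (fun p => ψ p i) := contDiff_pi.1 hψ i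

lemma hD (i : Fin d) (q : ℝ × (Fin d → ℝ)) :
    HasFDerivAt (fun p => ψ p i) (Dmap ψ i q) q :=
  (((hphi hψ i).differentiable (by norm_num)) q).hasFDerivAt

lemma hDc (i : Fin d) : ContDiff ℝ 1 (Dmap ψ i) :=
  (hphi hψ i).fderiv_right (by norm_num)

lemma hB (i : Fin d) (q : ℝ × (Fin d → ℝ)) :
    HasFDerivAt (Dmap ψ i) (Bmap ψ i q) q :=
  (((hDc hψ i).differentiable (by norm_num)) q).hasFDerivAt

lemma hsymm (i : Fin d) (q u w : ℝ × (Fin d → ℝ)) :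
    Bmap ψ i q u w = Bmap ψ i q w u :=
  second_derivative_symmetric (fun y => hD hψ i y) (hB hψ i q) u w

/-- derivative of `q ↦ D_i q u`. -/
lemma hDapp (i : Fin d) (u : ℝ × (Fin d → ℝ)) (q : ℝ × (Fin d → ℝ)) :
    HasFDerivAt (fun q' => Dmap ψ i q' u)
      ((ContinuousLinearMap.apply ℝ ℝ u).comp (Bmap ψ i q)) q :=
  (ContinuousLinearMap.apply ℝ ℝ u).hasFDerivAt.comp q (hB hψ i q)

end setup

section rows

variable {d : ℕ} (ψ : ℝ × (Fin d → ℝ) → (Fin d → ℝ))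

/-- The `l`-th row used in the column-wise description of the Jacobian. -/
noncomputable def Rrow (q : ℝ × (Fin d → ℝ)) (l : Fin d) : Fin d → ℝ :=
  fun k => Dmap ψ k q (0, Pi.single l 1)

/-- The time derivative vector. -/
noncomputable def vvec (q : ℝ × (Fin d → ℝ)) : Fin d → ℝ :=
  fun k => Dmap ψ k q (1, 0)

/-- Derivative of the row map `q ↦ (k ↦ D_k q u)`. -/
noncomputable def rowD (u : ℝ × (Fin d → ℝ)) (q : ℝ × (Fin d → ℝ)) :
    (ℝ × (Fin d → ℝ)) →L[ℝ] (Fin d → ℝ) :=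
  ContinuousLinearMap.pi fun k => (ContinuousLinearMap.apply ℝ ℝ u).comp (Bmap ψ k q)

variable {ψ}
variable (hψ : ContDiff ℝ 2 ψ)
include hψ

lemma hrow (u : ℝ × (Fin d → ℝ)) (q : ℝ × (Fin d → ℝ)) :
    HasFDerivAt (fun q' k => Dmap ψ k q' u) (rowD ψ u q) q :=
  hasFDerivAt_pi.2 fun k => hDapp hψ k u q

/-- Derivative of a determinant whose rows are `k ↦ D_k q (u l)`. -/
lemma detRows (u : Fin d → ℝ × (Fin d → ℝ)) (q : ℝ × (Fin d → ℝ)) :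
    HasFDerivAt (fun q' => detCMM d (fun l k => Dmap ψ k q' (u l)))
      (((detCMM d).linearDeriv (fun l k => Dmap ψ k q (u l))).comp
        (ContinuousLinearMap.pi fun l => rowD ψ (u l) q)) q :=
  ((detCMM d).hasFDerivAt _).comp q (hasFDerivAt_pi.2 fun l => hrow hψ (u l) q)

omit hψ

lemma detRows_apply (u : Fin d → ℝ × (Fin d → ℝ)) (q w : ℝ × (Fin d → ℝ)) :
    (((detCMM d).linearDeriv (fun l k => Dmap ψ k q (u l))).comp
        (ContinuousLinearMap.pi fun l => rowD ψ (u l) q)) w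
      = ∑ l, detCMM d (Function.update (fun l k => Dmap ψ k q (u l)) l
          (fun k => Bmap ψ k q w (u l))) := by
  rw [ContinuousLinearMap.comp_apply, ContinuousMultilinearMap.linearDeriv_apply]
  rfl

end rows

section conv

variable {d : ℕ} {ψ : ℝ × (Fin d → ℝ) → (Fin d → ℝ)} (hψ : ContDiff ℝ 2 ψ)

/-- Composition with `y ↦ (s, y)`: partial spatial derivatives. -/
lemma pderiv_comp_snd (g : ℝ × (Fin d → ℝ) → ℝ) (L : (ℝ × (Fin d → ℝ)) →L[ℝ] ℝ)
    (s : ℝ) (y : Fin d → ℝ) (h : HasFDerivAt g L (s, y)) (j : Fin d) :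
    pderiv' j (fun y' => g (s, y')) y = L (0, Pi.single j 1) := by
  have h1 : HasFDerivAt (fun y' : Fin d → ℝ => (s, y'))
      ((0 : (Fin d → ℝ) →L[ℝ] ℝ).prod (ContinuousLinearMap.id ℝ (Fin d → ℝ))) y :=
    HasFDerivAt.prodMk (hasFDerivAt_const s y) (hasFDerivAt_id y)
  have h2 : HasFDerivAt (fun y' => g (s, y'))
      (L.comp ((0 : (Fin d → ℝ) →L[ℝ] ℝ).prod (ContinuousLinearMap.id ℝ (Fin d → ℝ)))) y :=
    h.comp y h1
  show fderiv ℝ (fun y' => g (s, y')) y (Pi.single j 1) = _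
  rw [h2.fderiv]
  rfl

/-- Composition with `s ↦ (s, y)`: time derivative. -/
lemma deriv_comp_fst (g : ℝ × (Fin d → ℝ) → ℝ) (L : (ℝ × (Fin d → ℝ)) →L[ℝ] ℝ)
    (s : ℝ) (y : Fin d → ℝ) (h : HasFDerivAt g L (s, y)) :
    deriv (fun s' => g (s', y)) s = L (1, 0) := by
  have h1 : HasFDerivAt (fun s' : ℝ => (s', y))
      ((ContinuousLinearMap.id ℝ ℝ).prod (0 : ℝ →L[ℝ] (Fin d → ℝ))) s :=
    HasFDerivAt.prodMk (hasFDerivAt_id s) (hasFDerivAt_const y s)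
  have h2 : HasFDerivAt (fun s' => g (s', y))
      (L.comp ((ContinuousLinearMap.id ℝ ℝ).prod (0 : ℝ →L[ℝ] (Fin d → ℝ)))) s :=
    h.comp s h1
  rw [h2.hasDerivAt.deriv]
  rfl

include hψ

lemma jac_eq (s : ℝ) (y : Fin d → ℝ) :
    jacobianX ψ s y = (Matrix.of (Rrow ψ (s, y)))ᵀ := by
  ext i j
  show pderiv' j (fun y' => ψ (s, y') i) y = Dmap ψ i (s, y) (0, Pi.single j 1)
  exact pderiv_comp_snd (fun p => ψ p i) (Dmap ψ i (s, y)) s y (hD hψ i (s, y)) j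

lemma vderiv_eq (s : ℝ) (y : Fin d → ℝ) (i : Fin d) :
    deriv (fun s' => ψ (s', y) i) s = vvec ψ (s, y) i :=
  deriv_comp_fst (fun p => ψ p i) (Dmap ψ i (s, y)) s y (hD hψ i (s, y))

end conv

lemma adj_mulVec_eq {d : ℕ} (M : Matrix (Fin d) (Fin d) ℝ) (b : Fin d → ℝ) (j : Fin d) :
    (M.adjugate *ᵥ b) j = ((Mᵀ).updateRow j b).det := by
  have h := Matrix.cramer_eq_adjugate_mulVec M b
  rw [← h, Matrix.cramer_apply, Matrix.updateRow_transpose, Matrix.det_transpose]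

/-- Directions attached to the rows of the matrix occurring on the RHS. -/
noncomputable def ucol (d : ℕ) (j : Fin d) : Fin d → ℝ × (Fin d → ℝ) :=
  Function.update (fun l => ((0 : ℝ), Pi.single l 1)) j (1, 0)

lemma update_rows_eq {d : ℕ} (ψ : ℝ × (Fin d → ℝ) → (Fin d → ℝ))
    (q : ℝ × (Fin d → ℝ)) (j : Fin d) :
    (fun l k => Dmap ψ k q (ucol d j l))
      = Function.update (Rrow ψ q) j (vvec ψ q) := by
  funext l
  rcases eq_or_ne l j with rfl | h
  · simp only [Function.update_self, ucol]
    rfl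
  · simp only [ucol, Function.update_of_ne h]
    rfl

/-- **Jacobi's formula combined with the Piola identity**: for a C² map
`ψ : ℝ × ℝ^d → ℝ^d`,
`∂_t det(D_xψ(t,x)) = div_x( adj(D_xψ(t,x)) · ∂_tψ(t,x) )`. -/
theorem jacobi_piola {d : ℕ} (hd : 1 ≤ d) (ψ : ℝ × (Fin d → ℝ) → (Fin d → ℝ))
    (hψ : ContDiff ℝ 2 ψ) (t : ℝ) (x : Fin d → ℝ) :
    deriv (fun s => (jacobianX ψ s x).det) t =
      ∑ j : Fin d,
        pderiv' j
          (fun y => ((jacobianX ψ t y).adjugate *ᵥ fun i => deriv (fun s => ψ (s, y) i) t) j)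
          x := by
  classical
  set p₀ : ℝ × (Fin d → ℝ) := (t, x) with hp₀
  set R0 : Fin d → Fin d → ℝ := Rrow ψ p₀ with hR0
  set v0 : Fin d → ℝ := vvec ψ p₀ with hv0
  -- LHS computation
  have hL : deriv (fun s => (jacobianX ψ s x).det) t
      = ∑ l, detCMM d (Function.update R0 l
          (fun k => Bmap ψ k p₀ (1, 0) ((0 : ℝ), Pi.single l 1))) := by
    have hfun : (fun s => (jacobianX ψ s x).det)
        = fun s => detCMM d (fun l k => Dmap ψ k (s, x) ((0 : ℝ), Pi.single l 1)) := by
      funext s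
      rw [jac_eq hψ s x, Matrix.det_transpose]
      rfl
    rw [hfun, deriv_comp_fst _ _ t x (detRows hψ (fun l => ((0 : ℝ), Pi.single l 1)) p₀),
      detRows_apply]
    rfl
  -- RHS computation, term by term
  have hRj : ∀ j : Fin d,
      pderiv' j
          (fun y => ((jacobianX ψ t y).adjugate *ᵥ fun i => deriv (fun s => ψ (s, y) i) t) j) x
        = ∑ l, detCMM d (Function.update (fun l k => Dmap ψ k p₀ (ucol d j l)) l
            (fun k => Bmap ψ k p₀ (0, Pi.single j 1) (ucol d j l))) := by
    intro j
    have hfun : (fun y => ((jacobianX ψ t y).adjugate *ᵥ fun i => deriv (fun s => ψ (s, y) i) t) j)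
        = fun y => detCMM d (fun l k => Dmap ψ k (t, y) (ucol d j l)) := by
      funext y
      rw [adj_mulVec_eq]
      have hb : (fun i => deriv (fun s => ψ (s, y) i) t) = vvec ψ (t, y) :=
        funext fun i => vderiv_eq hψ t y i
      rw [hb, jac_eq hψ t y, Matrix.transpose_transpose, update_rows_eq ψ (t, y) j]
      rfl
    rw [hfun, pderiv_comp_snd _ _ t x (detRows hψ (ucol d j) p₀) j, detRows_apply]
  rw [hL]
  simp only [hRj]
  -- abbreviation for the "error" terms
  set F : Fin d → Fin d → ℝ := fun j l =>
    detCMM d (Function.update (Function.update R0 j v0) l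
      (fun k => Bmap ψ k p₀ (0, Pi.single j 1) (0, Pi.single l 1))) with hF
  -- split each RHS term into the main term and error terms
  have key : ∀ j : Fin d,
      (∑ l, detCMM d (Function.update (fun l k => Dmap ψ k p₀ (ucol d j l)) l
          (fun k => Bmap ψ k p₀ (0, Pi.single j 1) (ucol d j l))))
        = detCMM d (Function.update R0 j
            (fun k => Bmap ψ k p₀ (1, 0) ((0 : ℝ), Pi.single j 1)))
          + ∑ l ∈ Finset.univ.erase j, F j l := by
    intro j
    rw [update_rows_eq ψ p₀ j, ← hR0, ← hv0,
      ← Finset.add_sum_erase Finset.univ _ (Finset.mem_univ j)]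
    congr 1
    · -- diagonal term
      rw [Function.update_idem]
      have h1 : ucol d j j = ((1 : ℝ), (0 : Fin d → ℝ)) := Function.update_self _ _ _
      rw [h1]
      have h2 : (fun k => Bmap ψ k p₀ ((0 : ℝ), Pi.single j 1) ((1 : ℝ), (0 : Fin d → ℝ)))
          = fun k => Bmap ψ k p₀ (1, 0) ((0 : ℝ), Pi.single j 1) :=
        funext fun k => hsymm hψ k p₀ _ _
      rw [h2]
    · -- off-diagonal terms
      refine Finset.sum_congr rfl fun l hl => ?_
      have hlj : l ≠ j := (Finset.mem_erase.1 hl).1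
      have h1 : ucol d j l = ((0 : ℝ), Pi.single l 1) := Function.update_of_ne hlj _ _
      rw [h1, hF]
  simp only [key]
  rw [Finset.sum_add_distrib]
  -- the error terms cancel in pairs
  have hFanti : ∀ j l : Fin d, l ≠ j → F j l = - F l j := by
    intro j l h
    have hc : (fun k => Bmap ψ k p₀ (0, Pi.single j 1) (0, Pi.single l 1))
        = fun k => Bmap ψ k p₀ (0, Pi.single l 1) (0, Pi.single j 1) :=
      funext fun k => hsymm hψ k p₀ _ _
    have hswap : (Function.update (Function.update R0 j v0) l
          (fun k => Bmap ψ k p₀ (0, Pi.single j 1) (0, Pi.single l 1))) ∘ (Equiv.swap j l)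
        = Function.update (Function.update R0 l v0) j
          (fun k => Bmap ψ k p₀ (0, Pi.single j 1) (0, Pi.single l 1)) := by
      funext i
      simp only [Function.comp_apply]
      rcases eq_or_ne i j with hij | hij
      · subst hij
        rw [Equiv.swap_apply_left, Function.update_self,
          Function.update_self]
      · rcases eq_or_ne i l with hil | hil
        · subst hil
          rw [Equiv.swap_apply_right, Function.update_of_ne (Ne.symm h),
            Function.update_self, Function.update_of_ne hij, Function.update_self]
        · rw [Equiv.swap_apply_of_ne_of_ne hij hil, Function.update_of_ne hil,
            Function.update_of_ne hij, Function.update_of_ne hij,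
            Function.update_of_ne hil]
    have := detCMM_swap (Function.update (Function.update R0 j v0) l
      (fun k => Bmap ψ k p₀ (0, Pi.single j 1) (0, Pi.single l 1))) (Ne.symm h)
    rw [hswap] at this
    rw [hF]
    have hdc : detCMM d (Function.update (Function.update R0 l v0) j
          (fun k => Bmap ψ k p₀ (0, Pi.single l 1) (0, Pi.single j 1)))
        = - detCMM d (Function.update (Function.update R0 j v0) l
          (fun k => Bmap ψ k p₀ (0, Pi.single j 1) (0, Pi.single l 1))) := by
      rw [← hc]
      exact this
    simp only [hF] at hdc ⊢
    linarith [hdc]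
  have hT : (∑ j, ∑ l ∈ Finset.univ.erase j, F j l) = 0 := by
    have h1 : (∑ j, ∑ l ∈ Finset.univ.erase j, F j l)
        = -(∑ j, ∑ l ∈ Finset.univ.erase j, F l j) := by
      rw [← Finset.sum_neg_distrib]
      refine Finset.sum_congr rfl fun j _ => ?_
      rw [← Finset.sum_neg_distrib]
      refine Finset.sum_congr rfl fun l hl => ?_
      exact hFanti j l (Finset.mem_erase.1 hl).1
    have h2 : (∑ j, ∑ l ∈ Finset.univ.erase j, F l j)
        = ∑ j, ∑ l ∈ Finset.univ.erase j, F j l := by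
      exact Finset.sum_comm' (s := Finset.univ) (t := fun j => Finset.univ.erase j)
        (t' := Finset.univ) (s' := fun l => Finset.univ.erase l) (f := fun x y => F y x)
        (by
          intro a b
          simp only [Finset.mem_univ, true_and, and_true, Finset.mem_erase]
          exact ne_comm)
    rw [h2] at h1
    linarith
  rw [hT, add_zero]
end
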